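/- Let Ω' ⊆ ℝ² be a measurable set, κ > 0, and let c : ℝ² → ℝ be differentiable with 0 ≤ c(x) ≤ 1 for all x ∈ Ω' and with |∂ₓc(x)| ≤ κ √(c(x)(1 − c(x))) and |∂_y c(x)| ≤ κ √(c(x)(1 − c(x))) for almost every x ∈ Ω'. Then there exists a constant K > 0, depending only on κ, such that for all differentiable functions u, φ : ℝ² → ℝ for which the integrands below are integrable on Ω' and for which ‖u‖_V and ‖φ‖_V are finite, the bilinear form B^c(u,φ) = ∫_{Ω'} (1−c) ∇u·∇φ − (∇c·∇u) φ + c u φ dx satisfies |B^c(u,φ)| ≤ K ‖u‖_V ‖φ‖_V. -/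

import Mathlib

open MeasureTheory
open scoped RealInnerProductSpace

/-- Cauchy–Schwarz for integrals of real functions. -/
lemma integral_mul_le_sqrt_mul_sqrt {α : Type*} [MeasurableSpace α] {μ : Measure α}
    {f g : α → ℝ} (hf : MemLp f 2 μ) (hg : MemLp g 2 μ) :
    ∫ x, f x * g x ∂μ ≤
      Real.sqrt (∫ x, f x ^ 2 ∂μ) * Real.sqrt (∫ x, g x ^ 2 ∂μ) := by
  have hF := hf.coeFn_toLp
  have hG := hg.coeFn_toLp
  have h1 : ∫ x, f x * g x ∂μ = ⟪hf.toLp f, hg.toLp g⟫ := by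
    rw [MeasureTheory.L2.inner_def]
    refine integral_congr_ae ?_
    filter_upwards [hF, hG] with x hx hy
    simp [hx, hy, mul_comm]
  have h2 : ∫ x, f x ^ 2 ∂μ = ‖hf.toLp f‖ ^ 2 := by
    rw [← real_inner_self_eq_norm_sq, MeasureTheory.L2.inner_def]
    refine integral_congr_ae ?_
    filter_upwards [hF] with x hx
    simp [hx, sq]
  have h3 : ∫ x, g x ^ 2 ∂μ = ‖hg.toLp g‖ ^ 2 := by
    rw [← real_inner_self_eq_norm_sq, MeasureTheory.L2.inner_def]
    refine integral_congr_ae ?_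
    filter_upwards [hG] with x hx
    simp [hx, sq]
  rw [h1, h2, h3, Real.sqrt_sq (norm_nonneg _), Real.sqrt_sq (norm_nonneg _)]
  exact real_inner_le_norm _ _

set_option maxHeartbeats 1000000 in
theorem bilinear_form_continuous (κ : ℝ) (hκ : 0 < κ) :
    ∃ K > (0 : ℝ),
      ∀ Ω' : Set (EuclideanSpace ℝ (Fin 2)), MeasurableSet Ω' →
      ∀ c : EuclideanSpace ℝ (Fin 2) → ℝ, Differentiable ℝ c →
      (∀ x ∈ Ω', 0 ≤ c x ∧ c x ≤ 1) →
      (∀ᵐ x ∂(volume.restrict Ω'),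
        |gradient c x 0| ≤ κ * Real.sqrt (c x * (1 - c x)) ∧
        |gradient c x 1| ≤ κ * Real.sqrt (c x * (1 - c x))) →
      ∀ u φ : EuclideanSpace ℝ (Fin 2) → ℝ, Differentiable ℝ u → Differentiable ℝ φ →
      IntegrableOn (fun x => (1 - c x) * ⟪gradient u x, gradient φ x⟫
        - ⟪gradient c x, gradient u x⟫ * φ x + c x * u x * φ x) Ω' volume →
      IntegrableOn (fun x => (1 - c x) * ‖gradient u x‖ ^ 2 + u x ^ 2) Ω' volume →
      IntegrableOn (fun x => (1 - c x) * ‖gradient φ x‖ ^ 2 + φ x ^ 2) Ω' volume →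
      |∫ x in Ω', ((1 - c x) * ⟪gradient u x, gradient φ x⟫
          - ⟪gradient c x, gradient u x⟫ * φ x + c x * u x * φ x)| ≤
        K * Real.sqrt (∫ x in Ω', ((1 - c x) * ‖gradient u x‖ ^ 2 + u x ^ 2))
          * Real.sqrt (∫ x in Ω', ((1 - c x) * ‖gradient φ x‖ ^ 2 + φ x ^ 2)) := by
  refine ⟨2 + 2 * κ, by linarith, ?_⟩
  intro Ω' hΩ' c hc hc01 hgrad u φ hu hφ hI hGu hGφ
  set μ := volume.restrict Ω' with hμ
  set f : EuclideanSpace ℝ (Fin 2) → ℝ :=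
    fun x => Real.sqrt ((1 - c x) * ‖gradient u x‖ ^ 2 + u x ^ 2) with hf_def
  set g : EuclideanSpace ℝ (Fin 2) → ℝ :=
    fun x => Real.sqrt ((1 - c x) * ‖gradient φ x‖ ^ 2 + φ x ^ 2) with hg_def
  have hmem : ∀ᵐ x ∂μ, x ∈ Ω' := ae_restrict_mem hΩ'
  have hGu' : Integrable (fun x => (1 - c x) * ‖gradient u x‖ ^ 2 + u x ^ 2) μ := hGu
  have hGφ' : Integrable (fun x => (1 - c x) * ‖gradient φ x‖ ^ 2 + φ x ^ 2) μ := hGφ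
  -- a.e. nonnegativity of the energy densities
  have hgu_nn : ∀ᵐ x ∂μ, 0 ≤ (1 - c x) * ‖gradient u x‖ ^ 2 + u x ^ 2 := by
    filter_upwards [hmem] with x hx
    have := (hc01 x hx).2
    have := sq_nonneg (‖gradient u x‖); have := sq_nonneg (u x)
    nlinarith
  have hgφ_nn : ∀ᵐ x ∂μ, 0 ≤ (1 - c x) * ‖gradient φ x‖ ^ 2 + φ x ^ 2 := by
    filter_upwards [hmem] with x hx
    have := (hc01 x hx).2
    have := sq_nonneg (‖gradient φ x‖); have := sq_nonneg (φ x)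
    nlinarith
  have hf_meas : AEStronglyMeasurable f μ :=
    Real.continuous_sqrt.comp_aestronglyMeasurable hGu'.aestronglyMeasurable
  have hg_meas : AEStronglyMeasurable g μ :=
    Real.continuous_sqrt.comp_aestronglyMeasurable hGφ'.aestronglyMeasurable
  have hfsq : (fun x => f x ^ 2) =ᵐ[μ] fun x => (1 - c x) * ‖gradient u x‖ ^ 2 + u x ^ 2 := by
    filter_upwards [hgu_nn] with x hx
    simpa [hf_def] using Real.sq_sqrt hx
  have hgsq : (fun x => g x ^ 2) =ᵐ[μ] fun x => (1 - c x) * ‖gradient φ x‖ ^ 2 + φ x ^ 2 := by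
    filter_upwards [hgφ_nn] with x hx
    simpa [hg_def] using Real.sq_sqrt hx
  have hfL2 : MemLp f 2 μ :=
    (memLp_two_iff_integrable_sq hf_meas).2 (hGu'.congr hfsq.symm)
  have hgL2 : MemLp g 2 μ :=
    (memLp_two_iff_integrable_sq hg_meas).2 (hGφ'.congr hgsq.symm)
  have hfg_int : Integrable (fun x => f x * g x) μ := by
    have h := hfL2.smul (φ := g) hgL2 (r := 1) (hpqr := ⟨by norm_num [ENNReal.inv_two_add_inv_two]⟩)
    rw [memLp_one_iff_integrable] at h
    exact h.congr (Filter.Eventually.of_forall fun x => by simp [mul_comm])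
  -- pointwise a.e. bound
  have hκ0 : (0:ℝ) ≤ κ := hκ.le
  have hptwise : ∀ᵐ x ∂μ,
      |(1 - c x) * ⟪gradient u x, gradient φ x⟫
        - ⟪gradient c x, gradient u x⟫ * φ x + c x * u x * φ x|
        ≤ (2 + 2 * κ) * (f x * g x) := by
    filter_upwards [hmem, hgrad] with x hx hgx
    obtain ⟨hd0, hd1⟩ := hgx
    obtain ⟨hc0, hc1⟩ := hc01 x hx
    have hs : (0:ℝ) ≤ 1 - c x := by linarith
    have hnu := norm_nonneg (gradient u x)
    have hnφ := norm_nonneg (gradient φ x)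
    have hfnn : 0 ≤ f x := Real.sqrt_nonneg _
    have hgnn : 0 ≤ g x := Real.sqrt_nonneg _
    have hA1 : Real.sqrt (1 - c x) * ‖gradient u x‖ ≤ f x := by
      rw [hf_def, ← Real.sqrt_sq hnu, ← Real.sqrt_mul hs]
      exact Real.sqrt_le_sqrt (by nlinarith [sq_nonneg (u x)])
    have hB1 : Real.sqrt (1 - c x) * ‖gradient φ x‖ ≤ g x := by
      rw [hg_def, ← Real.sqrt_sq hnφ, ← Real.sqrt_mul hs]
      exact Real.sqrt_le_sqrt (by nlinarith [sq_nonneg (φ x)])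
    have hA2 : |u x| ≤ f x := by
      rw [hf_def, ← Real.sqrt_sq_eq_abs]
      exact Real.sqrt_le_sqrt (by nlinarith [mul_nonneg hs (sq_nonneg ‖gradient u x‖)])
    have hB2 : |φ x| ≤ g x := by
      rw [hg_def, ← Real.sqrt_sq_eq_abs]
      exact Real.sqrt_le_sqrt (by nlinarith [mul_nonneg hs (sq_nonneg ‖gradient φ x‖)])
    have hcc : (0:ℝ) ≤ c x * (1 - c x) := mul_nonneg hc0 hs
    have hnc : ‖gradient c x‖ ≤ 2 * κ * Real.sqrt (1 - c x) := by
      rw [EuclideanSpace.norm_eq]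
      have hsum : ∑ i : Fin 2, ‖gradient c x i‖ ^ 2
          = ‖gradient c x 0‖ ^ 2 + ‖gradient c x 1‖ ^ 2 := Fin.sum_univ_two _
      rw [hsum]
      have hsq := Real.sq_sqrt hcc
      have h0sq : ‖gradient c x 0‖ ^ 2 ≤ κ ^ 2 * (c x * (1 - c x)) := by
        rw [Real.norm_eq_abs]
        nlinarith [abs_nonneg (gradient c x 0), Real.sqrt_nonneg (c x * (1 - c x))]
      have h1sq : ‖gradient c x 1‖ ^ 2 ≤ κ ^ 2 * (c x * (1 - c x)) := by
        rw [Real.norm_eq_abs]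
        nlinarith [abs_nonneg (gradient c x 1), Real.sqrt_nonneg (c x * (1 - c x))]
      calc Real.sqrt (‖gradient c x 0‖ ^ 2 + ‖gradient c x 1‖ ^ 2)
          ≤ Real.sqrt ((2 * κ) ^ 2 * (1 - c x)) := by
            apply Real.sqrt_le_sqrt
            nlinarith [sq_nonneg κ]
        _ = 2 * κ * Real.sqrt (1 - c x) := by
            rw [Real.sqrt_mul (by positivity), Real.sqrt_sq (by positivity)]
    have hinn1 : |⟪gradient u x, gradient φ x⟫| ≤ ‖gradient u x‖ * ‖gradient φ x‖ :=
      abs_real_inner_le_norm _ _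
    have hinn2 : |⟪gradient c x, gradient u x⟫| ≤ ‖gradient c x‖ * ‖gradient u x‖ :=
      abs_real_inner_le_norm _ _
    have e1 : |(1 - c x) * ⟪gradient u x, gradient φ x⟫| ≤ f x * g x := by
      rw [abs_mul, abs_of_nonneg hs]
      calc (1 - c x) * |⟪gradient u x, gradient φ x⟫|
          ≤ (1 - c x) * (‖gradient u x‖ * ‖gradient φ x‖) :=
            mul_le_mul_of_nonneg_left hinn1 hs
        _ = (Real.sqrt (1 - c x) * ‖gradient u x‖) * (Real.sqrt (1 - c x) * ‖gradient φ x‖) := by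
            have h := Real.mul_self_sqrt hs
            linear_combination (-(‖gradient u x‖ * ‖gradient φ x‖)) * h
        _ ≤ f x * g x := by
            apply mul_le_mul hA1 hB1 (by positivity) hfnn
    have e2 : |⟪gradient c x, gradient u x⟫ * φ x| ≤ 2 * κ * (f x * g x) := by
      rw [abs_mul]
      have h1 : |⟪gradient c x, gradient u x⟫| ≤ 2 * κ * f x := by
        calc |⟪gradient c x, gradient u x⟫| ≤ ‖gradient c x‖ * ‖gradient u x‖ := hinn2
          _ ≤ (2 * κ * Real.sqrt (1 - c x)) * ‖gradient u x‖ :=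
              mul_le_mul_of_nonneg_right hnc hnu
          _ = 2 * κ * (Real.sqrt (1 - c x) * ‖gradient u x‖) := by ring
          _ ≤ 2 * κ * f x := by
              apply mul_le_mul_of_nonneg_left hA1 (by positivity)
      calc |⟪gradient c x, gradient u x⟫| * |φ x| ≤ (2 * κ * f x) * g x := by
            apply mul_le_mul h1 hB2 (abs_nonneg _) (by positivity)
        _ = 2 * κ * (f x * g x) := by ring
    have e3 : |c x * u x * φ x| ≤ f x * g x := by
      rw [abs_mul, abs_mul, abs_of_nonneg hc0]
      calc c x * |u x| * |φ x| ≤ 1 * |u x| * |φ x| := by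
            apply mul_le_mul_of_nonneg_right
              (mul_le_mul_of_nonneg_right hc1 (abs_nonneg _)) (abs_nonneg _)
        _ = |u x| * |φ x| := by ring
        _ ≤ f x * g x := mul_le_mul hA2 hB2 (abs_nonneg _) hfnn
    calc |(1 - c x) * ⟪gradient u x, gradient φ x⟫
          - ⟪gradient c x, gradient u x⟫ * φ x + c x * u x * φ x|
        ≤ |(1 - c x) * ⟪gradient u x, gradient φ x⟫
            - ⟪gradient c x, gradient u x⟫ * φ x| + |c x * u x * φ x| := abs_add_le _ _
      _ ≤ |(1 - c x) * ⟪gradient u x, gradient φ x⟫|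
            + |⟪gradient c x, gradient u x⟫ * φ x| + |c x * u x * φ x| := by
          have := abs_sub ((1 - c x) * ⟪gradient u x, gradient φ x⟫)
            (⟪gradient c x, gradient u x⟫ * φ x)
          linarith
      _ ≤ (2 + 2 * κ) * (f x * g x) := by linarith
  -- put everything together
  have hIabs : Integrable (fun x => |(1 - c x) * ⟪gradient u x, gradient φ x⟫
      - ⟪gradient c x, gradient u x⟫ * φ x + c x * u x * φ x|) μ := hI.abs
  have hKfg : Integrable (fun x => (2 + 2 * κ) * (f x * g x)) μ := hfg_int.const_mul _
  have step1 : |∫ x in Ω', ((1 - c x) * ⟪gradient u x, gradient φ x⟫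
      - ⟪gradient c x, gradient u x⟫ * φ x + c x * u x * φ x)|
      ≤ ∫ x, |(1 - c x) * ⟪gradient u x, gradient φ x⟫
      - ⟪gradient c x, gradient u x⟫ * φ x + c x * u x * φ x| ∂μ := by
    simpa [Real.norm_eq_abs] using
      norm_integral_le_integral_norm (μ := μ) (fun x => (1 - c x) * ⟪gradient u x, gradient φ x⟫
        - ⟪gradient c x, gradient u x⟫ * φ x + c x * u x * φ x)
  have step2 : ∫ x, |(1 - c x) * ⟪gradient u x, gradient φ x⟫
      - ⟪gradient c x, gradient u x⟫ * φ x + c x * u x * φ x| ∂μ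
      ≤ ∫ x, (2 + 2 * κ) * (f x * g x) ∂μ :=
    integral_mono_ae hIabs hKfg hptwise
  have step3 : ∫ x, (2 + 2 * κ) * (f x * g x) ∂μ
      = (2 + 2 * κ) * ∫ x, f x * g x ∂μ := integral_const_mul _ _
  have step4 : ∫ x, f x * g x ∂μ ≤
      Real.sqrt (∫ x, f x ^ 2 ∂μ) * Real.sqrt (∫ x, g x ^ 2 ∂μ) :=
    integral_mul_le_sqrt_mul_sqrt hfL2 hgL2
  have heqf : ∫ x, f x ^ 2 ∂μ = ∫ x in Ω', ((1 - c x) * ‖gradient u x‖ ^ 2 + u x ^ 2) :=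
    integral_congr_ae hfsq
  have heqg : ∫ x, g x ^ 2 ∂μ = ∫ x in Ω', ((1 - c x) * ‖gradient φ x‖ ^ 2 + φ x ^ 2) :=
    integral_congr_ae hgsq
  have hK : (0:ℝ) ≤ 2 + 2 * κ := by linarith
  calc |∫ x in Ω', ((1 - c x) * ⟪gradient u x, gradient φ x⟫
      - ⟪gradient c x, gradient u x⟫ * φ x + c x * u x * φ x)|
      ≤ ∫ x, (2 + 2 * κ) * (f x * g x) ∂μ := step1.trans step2
    _ = (2 + 2 * κ) * ∫ x, f x * g x ∂μ := step3
    _ ≤ (2 + 2 * κ) * (Real.sqrt (∫ x, f x ^ 2 ∂μ) * Real.sqrt (∫ x, g x ^ 2 ∂μ)) :=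
        mul_le_mul_of_nonneg_left step4 hK
    _ = (2 + 2 * κ) * Real.sqrt (∫ x in Ω', ((1 - c x) * ‖gradient u x‖ ^ 2 + u x ^ 2))
          * Real.sqrt (∫ x in Ω', ((1 - c x) * ‖gradient φ x‖ ^ 2 + φ x ^ 2)) := by
        rw [heqf, heqg]; ring
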